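/- Let a₁,…,a_n be distinct reals, ε₁,…,ε_n ∈ {-1,1}, Δᵢ(a) = εᵢ(a-aᵢ), let I ⊆ ℝ be an open interval on which Δᵢ > 0 for all i, let F̂(a) = ∏_{i=1}^n (a-aᵢ), and let x(a) = ∑_{i=1}^n ξᵢ Δᵢ(a)^{-1/2} with ξᵢ ∈ ℝ. Then for every 1 ≤ k ≤ n, the function b_k(a) = ∑_{s=1}^{k} F̂^{(k-s)}(a)/(k-s)! · x^{(s)}(a)/(1/2)_s satisfies b_k(a) = − ∑_{i=1}^n (εᵢ ξᵢ / Δᵢ(a)^{1/2}) · (1/(k-1)!) · D_a^{k-1}(F̂/Δᵢ)(a) on I. -/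

import Mathlib

open Polynomial

/-- The Pochhammer symbol `(1/2)_s`. -/
noncomputable def poch (s : ℕ) : ℝ := (ascPochhammer ℝ s).eval (1/2 : ℝ)

lemma poch_succ (s : ℕ) : poch (s+1) = poch s * (1/2 + s) := by
  simp [poch, ascPochhammer_succ_right, Polynomial.eval_mul]

lemma poch_pos (s : ℕ) : 0 < poch s := by
  induction s with
  | zero => simp [poch]
  | succ m ih => rw [poch_succ]; positivity

/-- The falling-type product `∏_{m<s} (-1/2 - m)`. -/
noncomputable def nhf : ℕ → ℝ
  | 0 => 1
  | (s+1) => nhf s * (-(1/2) - s)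

lemma nhf_eq (s : ℕ) : nhf s = (-1)^s * poch s := by
  induction s with
  | zero => simp [nhf, poch]
  | succ m ih => rw [nhf, ih, poch_succ, pow_succ]; ring

lemma iteratedDeriv_of_hasDerivAt {U : Set ℝ} (hU : IsOpen U) (f : ℕ → ℝ → ℝ)
    (hf : ∀ s, ∀ t ∈ U, HasDerivAt (f s) (f (s+1) t) t) :
    ∀ s, ∀ t ∈ U, iteratedDeriv s (f 0) t = f s t := by
  intro s
  induction s with
  | zero => intro t _; simp
  | succ m ih =>
    intro t ht
    rw [iteratedDeriv_succ]
    have hev : iteratedDeriv m (f 0) =ᶠ[nhds t] f m :=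
      Filter.eventuallyEq_of_mem (hU.mem_nhds ht) ih
    rw [hev.deriv_eq]
    exact (hf m t ht).deriv

lemma iteratedDeriv_congr_open {U : Set ℝ} (hU : IsOpen U) {f g : ℝ → ℝ}
    (h : ∀ t ∈ U, f t = g t) : ∀ m, ∀ t ∈ U, iteratedDeriv m f t = iteratedDeriv m g t := by
  intro m
  induction m with
  | zero => intro t ht; simpa using h t ht
  | succ m ih =>
    intro t ht
    rw [iteratedDeriv_succ, iteratedDeriv_succ]
    have hev : iteratedDeriv m f =ᶠ[nhds t] iteratedDeriv m g :=
      Filter.eventuallyEq_of_mem (hU.mem_nhds ht) ih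
    exact hev.deriv_eq

lemma iteratedDeriv_eval (p : ℝ[X]) :
    ∀ m, iteratedDeriv m (fun u => p.eval u) = fun u => ((⇑derivative)^[m] p).eval u := by
  intro m
  induction m generalizing p with
  | zero => simp
  | succ m ih =>
    rw [iteratedDeriv_succ']
    have : deriv (fun u => p.eval u) = fun u => (derivative p).eval u := by
      funext u; exact Polynomial.deriv p
    rw [this, ih, Function.iterate_succ_apply]

lemma D_linear_mul (r : ℝ) (Q : ℝ[X]) :
    ∀ m, (⇑derivative)^[m+1] ((X - C r) * Q) =
      (X - C r) * (⇑derivative)^[m+1] Q + (((m:ℕ)+1 : ℕ) : ℝ[X]) * (⇑derivative)^[m] Q := by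
  intro m
  induction m with
  | zero => simp [derivative_mul]; ring
  | succ m ih =>
    rw [Function.iterate_succ_apply' derivative (m+1) ((X - C r) * Q), ih]
    rw [derivative_add, derivative_mul, derivative_mul,
      show derivative ((⇑derivative)^[m] Q) = (⇑derivative)^[m+1] Q from
        (Function.iterate_succ_apply' _ _ _).symm,
      show derivative ((⇑derivative)^[m+1] Q) = (⇑derivative)^[m+1+1] Q from
        (Function.iterate_succ_apply' _ _ _).symm]
    simp only [derivative_sub, derivative_X, derivative_C, derivative_natCast]
    push_cast
    ring

lemma telescope (z : ℝ) (hz : z ≠ 0) (c d : ℕ → ℝ)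
    (h0 : d 0 = z * c 0) (hs : ∀ m, d (m+1) = z * c (m+1) + c m) :
    ∀ k, ∑ j ∈ Finset.range (k+1), d (k-j) * (-z⁻¹)^(j+1) = - c k := by
  intro k
  induction k with
  | zero =>
    simp only [zero_add, Finset.range_one, Finset.sum_singleton, Nat.sub_zero, pow_one, h0]
    field_simp
  | succ k ih =>
    rw [Finset.sum_range_succ' (fun j => d (k+1-j) * (-z⁻¹)^(j+1)) (k+1)]
    have h2 : (∑ j ∈ Finset.range (k+1), d (k+1-(j+1)) * (-z⁻¹)^(j+1+1))
        = (∑ j ∈ Finset.range (k+1), d (k-j) * (-z⁻¹)^(j+1)) * (-z⁻¹) := by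
      rw [Finset.sum_mul]
      exact Finset.sum_congr rfl fun j _ => by
        rw [show k+1-(j+1) = k-j by omega, pow_succ]; ring
    rw [h2, ih]
    simp only [Nat.sub_zero, pow_one, hs k]
    field_simp
    linear_combination (-(c k) - z * c (k+1)) * mul_inv_cancel₀ hz

lemma xderiv (n : ℕ) (a ε ξ : Fin n → ℝ) :
    ∀ s, ∀ t, (∀ i, 0 < ε i * (t - a i)) →
      iteratedDeriv s (fun u => ∑ i, ξ i * (ε i * (u - a i)) ^ (-(1/2) : ℝ)) t
        = ∑ i, ξ i * nhf s * (ε i)^s * (ε i * (t - a i)) ^ (-(1/2) - s : ℝ) := by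
  set U : Set ℝ := ⋂ i, {u | 0 < ε i * (u - a i)} with hUdef
  have hUopen : IsOpen U := isOpen_iInter_of_finite fun i =>
    isOpen_lt continuous_const ((continuous_const.mul (continuous_id.sub continuous_const)))
  have hmem : ∀ t, (∀ i, 0 < ε i * (t - a i)) ↔ t ∈ U := by
    intro t; simp [hUdef, Set.mem_iInter]
  set f : ℕ → ℝ → ℝ := fun s u => ∑ i, ξ i * nhf s * (ε i)^s * (ε i * (u - a i)) ^ (-(1/2) - s : ℝ)
    with hfdef
  have hf0 : (fun u => ∑ i, ξ i * (ε i * (u - a i)) ^ (-(1/2) : ℝ)) = f 0 := by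
    funext u
    refine Finset.sum_congr rfl fun i _ => ?_
    norm_num [hfdef, nhf]
  have hf : ∀ s, ∀ t ∈ U, HasDerivAt (f s) (f (s+1) t) t := by
    intro s t ht
    rw [← hmem] at ht
    apply HasDerivAt.fun_sum
    intro i _
    have h1 : HasDerivAt (fun u => ε i * (u - a i)) (ε i) t := by
      simpa using ((hasDerivAt_id t).sub_const (a i)).const_mul (ε i)
    have h2 := (h1.rpow_const (p := -(1/2) - s) (Or.inl (ht i).ne')).const_mul
      (ξ i * nhf s * (ε i)^s)
    convert h2 using 1
    case e'_4 => rfl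
    rw [show nhf (s+1) = nhf s * (-(1/2) - s) from rfl]
    rw [show ((-(1/2) : ℝ) - ((s:ℕ)+1 : ℕ)) = (-(1/2) - (s:ℝ)) - 1 by push_cast; ring]
    ring
  intro s t ht
  rw [hf0]
  exact iteratedDeriv_of_hasDerivAt hUopen f hf s t ((hmem t).1 ht)

/-- For distinct reals `a₁,…,a_n`, signs `εᵢ ∈ {±1}`, `Δᵢ(a) = εᵢ(a-aᵢ)`
positive on the open interval `I`, `F̂(a) = ∏ᵢ (a-aᵢ)` and `x(a) = ∑ᵢ ξᵢ Δᵢ(a)^{-1/2}`: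
for every `1 ≤ k ≤ n`, the coefficient
`b_k(a) = ∑_{s=1}^{k} F̂^{(k-s)}(a)/(k-s)! · x^{(s)}(a)/(1/2)_s` satisfies
`b_k(a) = − ∑ᵢ (εᵢ ξᵢ / Δᵢ(a)^{1/2}) · (1/(k-1)!) · D_a^{k-1}(F̂/Δᵢ)(a)` on `I`. -/
theorem stmt6 (n : ℕ) (a : Fin n → ℝ) (ha : Function.Injective a)
    (ε : Fin n → ℝ) (hε : ∀ i, ε i = 1 ∨ ε i = -1)
    (I : Set ℝ) (hIopen : IsOpen I) (hIconn : I.OrdConnected)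
    (hΔ : ∀ i, ∀ t ∈ I, 0 < ε i * (t - a i))
    (ξ : Fin n → ℝ) :
    ∀ k : ℕ, 1 ≤ k → k ≤ n → ∀ t ∈ I,
      (∑ s ∈ Finset.Icc 1 k,
          iteratedDeriv (k - s) (fun u => ∏ i, (u - a i)) t / (Nat.factorial (k - s) : ℝ) *
            (iteratedDeriv s (fun u => ∑ i, ξ i * (ε i * (u - a i)) ^ (-(1/2) : ℝ)) t / poch s)) =
        - ∑ i, ε i * ξ i / (ε i * (t - a i)) ^ ((1/2) : ℝ) *
            ((1 : ℝ) / (Nat.factorial (k - 1) : ℝ)) *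
            iteratedDeriv (k - 1) (fun u => (∏ j, (u - a j)) / (ε i * (u - a i))) t := by
  intro k hk1 hkn t ht
  obtain ⟨K, rfl⟩ : ∃ K, k = K + 1 := ⟨k - 1, by omega⟩
  have hεsq : ∀ i, ε i * ε i = 1 := by
    intro i; rcases hε i with h | h <;> rw [h] <;> norm_num
  have hεne : ∀ i, ε i ≠ 0 := by
    intro i; rcases hε i with h | h <;> rw [h] <;> norm_num
  have hpos : ∀ i, 0 < ε i * (t - a i) := fun i => hΔ i t ht
  have hzne : ∀ i, t - a i ≠ 0 := by
    intro i h
    have := hpos i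
    rw [h, mul_zero] at this
    exact lt_irrefl 0 this
  set P : ℝ[X] := ∏ i, (X - C (a i)) with hP
  set Q : Fin n → ℝ[X] := fun i => ∏ j ∈ Finset.univ.erase i, (X - C (a j)) with hQ
  have hPQ : ∀ i, P = (X - C (a i)) * Q i := fun i =>
    (Finset.mul_prod_erase _ _ (Finset.mem_univ i)).symm
  set d : ℕ → ℝ := fun m => ((⇑derivative)^[m] P).eval t / (Nat.factorial m : ℝ) with hd
  set c : Fin n → ℕ → ℝ := fun i m => ((⇑derivative)^[m] (Q i)).eval t / (Nat.factorial m : ℝ)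
    with hc
  -- F̂ derivatives
  have hPf : (fun u : ℝ => ∏ i, (u - a i)) = fun u => P.eval u := by
    funext u; simp [hP, eval_prod]
  have hF : ∀ m, iteratedDeriv m (fun u : ℝ => ∏ i, (u - a i)) t
      = ((⇑derivative)^[m] P).eval t := by
    intro m; rw [hPf, iteratedDeriv_eval]
  -- RHS inner derivatives
  have hG : ∀ i, iteratedDeriv K (fun u => (∏ j, (u - a j)) / (ε i * (u - a i))) t
      = ε i * ((⇑derivative)^[K] (Q i)).eval t := by
    intro i
    have hV : IsOpen ({a i}ᶜ : Set ℝ) := isOpen_compl_singleton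
    have heq : ∀ u ∈ ({a i}ᶜ : Set ℝ),
        (∏ j, (u - a j)) / (ε i * (u - a i)) = (C (ε i) * Q i).eval u := by
      intro u hu
      have hune : u - a i ≠ 0 := sub_ne_zero.2 hu
      have hprod : (∏ j, (u - a j)) = (u - a i) * (Q i).eval u := by
        rw [hQ]
        simp only [eval_prod, eval_mul, eval_sub, eval_X, eval_C]
        exact (Finset.mul_prod_erase _ _ (Finset.mem_univ i)).symm
      rw [hprod, eval_mul, eval_C, div_eq_iff (mul_ne_zero (hεne i) hune)]
      linear_combination (-((Q i).eval u) * (u - a i)) * (hεsq i)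
    have ht' : t ∈ ({a i}ᶜ : Set ℝ) := by
      simp only [Set.mem_compl_iff, Set.mem_singleton_iff]
      intro h
      exact hzne i (by rw [h]; ring)
    rw [iteratedDeriv_congr_open hV heq K t ht', iteratedDeriv_eval,
      iterate_derivative_C_mul]
    simp
  -- telescope inputs
  have h0 : ∀ i, d 0 = (t - a i) * c i 0 := by
    intro i
    simp only [hd, hc, Function.iterate_zero, id_eq, Nat.factorial_zero, Nat.cast_one, div_one]
    rw [hPQ i, eval_mul, eval_sub, eval_X, eval_C]
  have hsucc : ∀ i m, d (m+1) = (t - a i) * c i (m+1) + c i m := by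
    intro i m
    have h := D_linear_mul (a i) (Q i) m
    rw [← hPQ i] at h
    have h2 := congrArg (eval t) h
    simp only [eval_add, eval_mul, eval_sub, eval_X, eval_C, eval_natCast] at h2
    simp only [hd, hc]
    rw [h2, Nat.factorial_succ]
    have hm : (Nat.factorial m : ℝ) ≠ 0 := Nat.cast_ne_zero.2 (Nat.factorial_ne_zero m)
    have hm1 : ((m : ℝ) + 1) ≠ 0 := by positivity
    field_simp
    push_cast
    ring
  -- telescoped sums
  have htel : ∀ i, ∑ s ∈ Finset.Icc 1 (K+1), d (K+1-s) * (-(t - a i)⁻¹)^s = - c i K := by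
    intro i
    rw [show Finset.Icc 1 (K+1) = Finset.Ico 1 (K+2) from (Finset.Ico_add_one_right_eq_Icc ..).symm,
      Finset.sum_Ico_eq_sum_range]
    rw [show K + 2 - 1 = K + 1 from rfl]
    rw [Finset.sum_congr rfl (fun j (_ : j ∈ Finset.range (K+1)) => by
      rw [show K+1-(1+j) = K-j by omega, show 1+j = j+1 by omega])]
    exact telescope (t - a i) (hzne i) (c i) d (h0 i) (hsucc i) K
  -- per-term simplification of x-derivative terms
  have hterm : ∀ i, ∀ s : ℕ,
      ξ i * nhf s * (ε i)^s * (ε i * (t - a i)) ^ (-(1/2) - s : ℝ) / poch s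
        = ξ i * (ε i * (t - a i)) ^ (-(1/2) : ℝ) * (-(t - a i)⁻¹)^s := by
    intro i s
    have hp := hpos i
    rw [nhf_eq, show (-(1/2) - (s:ℝ)) = (-(1/2)) + (-(s:ℝ)) by ring, Real.rpow_add hp,
      Real.rpow_neg hp.le (s:ℝ), Real.rpow_natCast]
    have hps : poch s ≠ 0 := (poch_pos s).ne'
    have hεpow : (ε i)^s * ((ε i * (t - a i))^s)⁻¹ = ((t - a i)^s)⁻¹ := by
      rw [mul_pow, mul_inv, ← mul_assoc, mul_inv_cancel₀ (pow_ne_zero s (hεne i)), one_mul]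
    have e1 : (-(t - a i)⁻¹)^s = (-1)^s * ((t - a i)^s)⁻¹ := by
      rw [neg_pow, inv_pow]
    rw [e1, ← hεpow]
    field_simp
  -- x derivatives
  have hx := xderiv n a ε ξ
  -- transform LHS term-by-term
  have hLHS : ∀ s ∈ Finset.Icc 1 (K+1),
      iteratedDeriv (K+1-s) (fun u : ℝ => ∏ i, (u - a i)) t / (Nat.factorial (K+1-s) : ℝ) *
        (iteratedDeriv s (fun u => ∑ i, ξ i * (ε i * (u - a i)) ^ (-(1/2) : ℝ)) t / poch s)
      = ∑ i, ξ i * (ε i * (t - a i)) ^ (-(1/2) : ℝ) * (d (K+1-s) * (-(t - a i)⁻¹)^s) := by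
    intro s _
    rw [hF, hx s t hpos, Finset.sum_div, Finset.mul_sum]
    refine Finset.sum_congr rfl fun i _ => ?_
    rw [hterm i s]
    simp only [hd]
    ring
  rw [Finset.sum_congr rfl hLHS, Finset.sum_comm]
  simp only [Nat.add_sub_cancel]
  rw [← Finset.sum_neg_distrib]
  refine Finset.sum_congr rfl fun i _ => ?_
  rw [← Finset.mul_sum, htel i, hG i]
  have hre : ε i * ξ i / (ε i * (t - a i)) ^ ((1/2) : ℝ) * ((1:ℝ)/(Nat.factorial K : ℝ)) *
      (ε i * ((⇑derivative)^[K] (Q i)).eval t)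
      = (ε i * ε i) * (ξ i * (((ε i * (t - a i)) ^ ((1/2) : ℝ))⁻¹ *
        (((⇑derivative)^[K] (Q i)).eval t / (Nat.factorial K : ℝ)))) := by
    ring
  rw [hre, hεsq i, one_mul]
  rw [Real.rpow_neg (hpos i).le]
  simp only [hc]
  ring
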